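/- arXiv:1801.09435 — 2 statements merged into one kernel-verified Lean document; each statement's English description precedes it below -/
import Mathlib

section
/- Let Ω ⊂ ℝ³ be a bounded open set, K : [0,∞) → [0,∞) continuous and bounded, β > 0, C₁, C₂ > 0, and k, l ∈ {1,2,3}. Let (ε_m) be positive reals with ε_m → 0. For each m, let x¹,…,x^{N_m} be distinct points of the closure of Ω, let V^i = {x ∈ Ω : |x − x^i| < |x − x^j| for all j ≠ i} be the Voronoi cell of x^i in Ω, and assume diam V^i ≤ C₁ε_m and vol(V^i) ≥ C₂ε_m³ for all i. Let A^{ij} ∈ {0,1} for all i, j. Define φ_m(x,y) = ε_m⁶ Σ_{i,j : |x^i−x^j| ≥ βε_m} A^{ij} vol(V^i)⁻¹ vol(V^j)⁻¹ 1_{V^i}(x) 1_{V^j}(y) and G_m(x,y) = ε_m⁶ Σ_{i,j : |x^i−x^j| ≥ βε_m} K(|x^i−x^j|) (x^i_k−x^j_k)(x^i_l−x^j_l) |x^i−x^j|⁻² A^{ij} vol(V^i)⁻¹ vol(V^j)⁻¹ 1_{V^i}(x) 1_{V^j}(y). Assume sup_m ‖φ_m‖_{L∞(Ω×Ω)} <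 ∞ and that φ_m converges weak-* in L∞(Ω×Ω) to some φ ∈ L∞(Ω×Ω). Then G_m converges weak-* in L∞(Ω×Ω) to G(x,y) = K(|x−y|) φ(x,y) (x_k−y_k)(x_l−y_l) |x−y|⁻². -/
open MeasureTheory Filter Topology Classical

private lemma coord_abs_le (a b : EuclideanSpace ℝ (Fin 3)) (k : Fin 3) :
    |a k - b k| ≤ dist a b := by
  rw [EuclideanSpace.dist_eq]
  calc |a k - b k| = dist (a k) (b k) := (Real.dist_eq _ _).symm
    _ = Real.sqrt (dist (a k) (b k) ^ 2) := (Real.sqrt_sq dist_nonneg).symm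
    _ ≤ Real.sqrt (∑ i, dist (a i) (b i) ^ 2) := Real.sqrt_le_sqrt
        (Finset.single_le_sum (f := fun i => dist (a i) (b i) ^ 2)
          (fun i _ => sq_nonneg _) (Finset.mem_univ k))

private noncomputable def fker (K : ℝ → ℝ) (k l : Fin 3)
    (a b : EuclideanSpace ℝ (Fin 3)) : ℝ :=
  K (dist a b) * (a k - b k) * (a l - b l) / dist a b ^ 2

private lemma fker_abs_le {K : ℝ → ℝ} {CK : ℝ} (hCK : ∀ r, |K r| ≤ CK) (k l : Fin 3)
    (a b : EuclideanSpace ℝ (Fin 3)) : |fker K k l a b| ≤ CK := by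
  have hCK0 : 0 ≤ CK := le_trans (abs_nonneg _) (hCK 0)
  by_cases hd : dist a b = 0
  · have h1 : a = b := dist_eq_zero.mp hd
    simp [fker, h1, hCK0]
  · have hdpos : 0 < dist a b := lt_of_le_of_ne dist_nonneg (Ne.symm hd)
    rw [fker, abs_div, abs_mul, abs_mul]
    rw [div_le_iff₀ (by positivity : (0:ℝ) < |dist a b ^ 2|)]
    have h2 : |dist a b ^ 2| = dist a b ^ 2 := abs_of_nonneg (sq_nonneg _)
    rw [h2]
    have h3 := coord_abs_le a b k
    have h4 := coord_abs_le a b l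
    have h5 := hCK (dist a b)
    have h6 := abs_nonneg (a k - b k)
    have h7 := abs_nonneg (a l - b l)
    have h8 := abs_nonneg (K (dist a b))
    have e1 : |K (dist a b)| * |a k - b k| ≤ CK * dist a b :=
      mul_le_mul h5 h3 h6 hCK0
    calc |K (dist a b)| * |a k - b k| * |a l - b l|
        ≤ CK * dist a b * dist a b := mul_le_mul e1 h4 h7 (by positivity)
      _ = CK * dist a b ^ 2 := by ring

private lemma fker_measurable (K : ℝ → ℝ) (hK : Continuous K) (k l : Fin 3) :
    Measurable (fun p : EuclideanSpace ℝ (Fin 3) × EuclideanSpace ℝ (Fin 3) =>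
      fker K k l p.1 p.2) := by
  have cd : Continuous fun p : EuclideanSpace ℝ (Fin 3) × EuclideanSpace ℝ (Fin 3) =>
      dist p.1 p.2 := continuous_fst.dist continuous_snd
  have ck : ∀ j : Fin 3, Continuous fun p : EuclideanSpace ℝ (Fin 3) × EuclideanSpace ℝ (Fin 3) =>
      p.1 j - p.2 j := fun j =>
    ((EuclideanSpace.proj j).continuous.comp continuous_fst).sub
      ((EuclideanSpace.proj j).continuous.comp continuous_snd)
  exact ((((hK.comp cd).mul (ck k)).mul (ck l)).measurable).div ((cd.pow 2).measurable)

private lemma fker_continuousAt (K : ℝ → ℝ) (hK : Continuous K) (k l : Fin 3)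
    (p : EuclideanSpace ℝ (Fin 3) × EuclideanSpace ℝ (Fin 3)) (hp : p.1 ≠ p.2) :
    ContinuousAt (fun q : EuclideanSpace ℝ (Fin 3) × EuclideanSpace ℝ (Fin 3) =>
      fker K k l q.1 q.2) p := by
  have cd : Continuous fun q : EuclideanSpace ℝ (Fin 3) × EuclideanSpace ℝ (Fin 3) =>
      dist q.1 q.2 := continuous_fst.dist continuous_snd
  have ck : ∀ j : Fin 3, Continuous fun q : EuclideanSpace ℝ (Fin 3) × EuclideanSpace ℝ (Fin 3) =>
      q.1 j - q.2 j := fun j =>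
    ((EuclideanSpace.proj j).continuous.comp continuous_fst).sub
      ((EuclideanSpace.proj j).continuous.comp continuous_snd)
  apply ContinuousAt.div
  · exact (((hK.comp cd).mul (ck k)).mul (ck l)).continuousAt
  · exact (cd.pow 2).continuousAt
  · have : dist p.1 p.2 ≠ 0 := dist_ne_zero.mpr hp
    positivity

private lemma collapse_zero {n : ℕ} {α β : Type*} (W : Fin n → Set α) (U : Fin n → Set β)
    (c : Fin n → Fin n → ℝ) (P : Fin n → Fin n → Prop) [∀ i j, Decidable (P i j)]
    (p₁ : α) (p₂ : β) (h : (∀ i, p₁ ∉ W i) ∨ (∀ j, p₂ ∉ U j)) :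
    (∑ i, ∑ j, if P i j then c i j * (W i).indicator (fun _ => (1:ℝ)) p₁ *
      (U j).indicator (fun _ => (1:ℝ)) p₂ else 0) = 0 := by
  apply Finset.sum_eq_zero; intro i _
  apply Finset.sum_eq_zero; intro j _
  rcases h with h | h
  · rw [Set.indicator_of_notMem (h i)]; split <;> simp
  · rw [Set.indicator_of_notMem (h j)]; split <;> simp

private lemma collapse_sum {n : ℕ} {α β : Type*} (W : Fin n → Set α) (U : Fin n → Set β)
    (hW : ∀ i i' y, y ∈ W i → y ∈ W i' → i = i')
    (hU : ∀ j j' y, y ∈ U j → y ∈ U j' → j = j')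
    (c : Fin n → Fin n → ℝ) (P : Fin n → Fin n → Prop) [∀ i j, Decidable (P i j)]
    (p₁ : α) (p₂ : β) (i0 j0 : Fin n) (h1 : p₁ ∈ W i0) (h2 : p₂ ∈ U j0) :
    (∑ i, ∑ j, if P i j then c i j * (W i).indicator (fun _ => (1:ℝ)) p₁ *
      (U j).indicator (fun _ => (1:ℝ)) p₂ else 0) = if P i0 j0 then c i0 j0 else 0 := by
  rw [Finset.sum_eq_single i0]
  · rw [Finset.sum_eq_single j0]
    · rw [Set.indicator_of_mem h1, Set.indicator_of_mem h2, mul_one, mul_one]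
    · intro j _ hj
      have : p₂ ∉ U j := fun hm => hj (hU j j0 p₂ hm h2)
      rw [Set.indicator_of_notMem this]; split <;> simp
    · intro hj; exact absurd (Finset.mem_univ j0) hj
  · intro i _ hi
    apply Finset.sum_eq_zero; intro j _
    have : p₁ ∉ W i := fun hm => hi (hW i i0 p₁ hm h1)
    rw [Set.indicator_of_notMem this]; split <;> simp
  · intro hi; exact absurd (Finset.mem_univ i0) hi

/-- **Lemma 3.2 of the paper.** The discrete long-range interaction kernels
`G_m(x,y) = ε_m⁶ Σ_{|xⁱ−xʲ| ≥ βε_m} K(|xⁱ−xʲ|)(xⁱ_k−xʲ_k)(xⁱ_l−xʲ_l)|xⁱ−xʲ|⁻² Aⁱʲ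
  vol(Vⁱ)⁻¹ vol(Vʲ)⁻¹ 1_{Vⁱ}(x) 1_{Vʲ}(y)`
converge weak-* in `L∞(Ω×Ω)` to `G(x,y) = K(|x−y|) φ(x,y) (x_k−y_k)(x_l−y_l)|x−y|⁻²`,
provided the pair-distribution functions `φ_m` are uniformly bounded in `L∞(Ω×Ω)` and
converge weak-* to `φ`. -/
theorem discrete_longrange_kernels_weakStar_limit
    (Ω : Set (EuclideanSpace ℝ (Fin 3)))
    (hΩ_open : IsOpen Ω) (hΩ_bdd : Bornology.IsBounded Ω)
    (K : ℝ → ℝ) (hK_cont : Continuous K)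
    (hK_nonneg : ∀ r : ℝ, 0 ≤ r → 0 ≤ K r)
    (hK_bdd : ∃ C : ℝ, ∀ r : ℝ, |K r| ≤ C)
    (β C₁ C₂ : ℝ) (hβ : 0 < β) (hC₁ : 0 < C₁) (hC₂ : 0 < C₂)
    (k l : Fin 3)
    (ε : ℕ → ℝ) (hε_pos : ∀ m, 0 < ε m) (hε_lim : Tendsto ε atTop (𝓝 0))
    (Np : ℕ → ℕ)
    (x : ∀ m : ℕ, Fin (Np m) → EuclideanSpace ℝ (Fin 3))
    (hx_inj : ∀ m, Function.Injective (x m))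
    (hx_mem : ∀ m i, x m i ∈ closure Ω)
    (V : ∀ m : ℕ, Fin (Np m) → Set (EuclideanSpace ℝ (Fin 3)))
    (hV : ∀ m i, V m i =
      {y ∈ Ω | ∀ j, j ≠ i → dist y (x m i) < dist y (x m j)})
    (hV_diam : ∀ m i, Metric.diam (V m i) ≤ C₁ * ε m)
    (hV_vol : ∀ m i, ENNReal.ofReal (C₂ * ε m ^ 3) ≤ volume (V m i))
    (A : ∀ m : ℕ, Fin (Np m) → Fin (Np m) → ℝ)
    (hA : ∀ m i j, A m i j = 0 ∨ A m i j = 1)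
    (φ : ℕ → EuclideanSpace ℝ (Fin 3) × EuclideanSpace ℝ (Fin 3) → ℝ)
    (hφ : ∀ m p, φ m p = ε m ^ 6 * ∑ i, ∑ j,
      if β * ε m ≤ dist (x m i) (x m j) then
        A m i j * ((volume (V m i)).toReal)⁻¹ * ((volume (V m j)).toReal)⁻¹ *
          Set.indicator (V m i) (fun _ => (1 : ℝ)) p.1 *
          Set.indicator (V m j) (fun _ => (1 : ℝ)) p.2
      else 0)
    (G : ℕ → EuclideanSpace ℝ (Fin 3) × EuclideanSpace ℝ (Fin 3) → ℝ)
    (hG : ∀ m p, G m p = ε m ^ 6 * ∑ i, ∑ j,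
      if β * ε m ≤ dist (x m i) (x m j) then
        K (dist (x m i) (x m j)) * (x m i k - x m j k) * (x m i l - x m j l) /
            dist (x m i) (x m j) ^ 2 *
          A m i j * ((volume (V m i)).toReal)⁻¹ * ((volume (V m j)).toReal)⁻¹ *
          Set.indicator (V m i) (fun _ => (1 : ℝ)) p.1 *
          Set.indicator (V m j) (fun _ => (1 : ℝ)) p.2
      else 0)
    (hφ_bdd : ∃ C : ℝ, ∀ m,
      eLpNorm (φ m) ⊤ (volume.restrict (Ω ×ˢ Ω)) ≤ ENNReal.ofReal C)
    (φlim : EuclideanSpace ℝ (Fin 3) × EuclideanSpace ℝ (Fin 3) → ℝ)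
    (hφlim : MemLp φlim ⊤ (volume.restrict (Ω ×ˢ Ω)))
    (hφ_weakstar : ∀ h : EuclideanSpace ℝ (Fin 3) × EuclideanSpace ℝ (Fin 3) → ℝ,
      Integrable h (volume.restrict (Ω ×ˢ Ω)) →
      Tendsto (fun m => ∫ p in Ω ×ˢ Ω, φ m p * h p) atTop
        (𝓝 (∫ p in Ω ×ˢ Ω, φlim p * h p))) :
    ∀ h : EuclideanSpace ℝ (Fin 3) × EuclideanSpace ℝ (Fin 3) → ℝ,
      Integrable h (volume.restrict (Ω ×ˢ Ω)) →
      Tendsto (fun m => ∫ p in Ω ×ˢ Ω, G m p * h p) atTop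
        (𝓝 (∫ p in Ω ×ˢ Ω,
          K (dist p.1 p.2) * φlim p * (p.1 k - p.2 k) * (p.1 l - p.2 l) /
            dist p.1 p.2 ^ 2 * h p)) := by
  intro h hh
  obtain ⟨CK, hCK⟩ := hK_bdd
  have hCK0 : 0 ≤ CK := le_trans (abs_nonneg _) (hCK 0)
  -- disjointness of Voronoi cells
  have hdisj : ∀ m i i' (y : EuclideanSpace ℝ (Fin 3)), y ∈ V m i → y ∈ V m i' → i = i' := by
    intro m i i' y h1 h2
    by_contra hne
    rw [hV] at h1 h2
    simp only [Set.mem_setOf_eq] at h1 h2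
    have e1 := h1.2 i' (fun e => hne e.symm)
    have e2 := h2.2 i hne
    exact absurd (lt_trans e1 e2) (lt_irrefl _)
  have hVsub : ∀ m i, V m i ⊆ Ω := by
    intro m i y hy
    rw [hV] at hy
    exact hy.1
  -- the site belongs to the closure of its Voronoi cell: distance bound
  have hxV : ∀ m (i : Fin (Np m)) y, y ∈ V m i → dist y (x m i) ≤ C₁ * ε m := by
    intro m i y hy
    have hVb : Bornology.IsBounded (V m i) := hΩ_bdd.subset (hVsub m i)
    apply le_of_forall_pos_lt_add
    intro ρ hρ
    have hne : (Finset.univ : Finset (Fin (Np m))).Nonempty := ⟨i, Finset.mem_univ i⟩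
    set dmin := Finset.univ.inf' hne
      (fun j => if j = i then ρ else dist (x m i) (x m j)) with hdmin
    have hdminpos : 0 < dmin := by
      rw [hdmin, Finset.lt_inf'_iff]
      intro j _
      by_cases hj : j = i
      · simp [hj, hρ]
      · simp only [if_neg hj]
        exact dist_pos.mpr (fun e => hj (hx_inj m e).symm)
    have hdmin_le : ∀ j, j ≠ i → dmin ≤ dist (x m i) (x m j) := by
      intro j hj
      calc dmin ≤ (if j = i then ρ else dist (x m i) (x m j)) :=
            Finset.inf'_le _ (Finset.mem_univ j)
        _ = dist (x m i) (x m j) := if_neg hj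
    have hrpos : 0 < min ρ (dmin / 2) := lt_min hρ (by linarith)
    obtain ⟨z, hzΩ, hz⟩ := Metric.mem_closure_iff.mp (hx_mem m i) _ hrpos
    have hzV : z ∈ V m i := by
      rw [hV]
      refine ⟨hzΩ, fun j hj => ?_⟩
      have e1 : dist z (x m i) < dmin / 2 := by
        rw [dist_comm]; exact lt_of_lt_of_le hz (min_le_right _ _)
      have e2 : dmin ≤ dist (x m i) (x m j) := hdmin_le j hj
      have e3 := dist_triangle (x m i) z (x m j)
      rw [dist_comm (x m i) z] at e3
      linarith
    have e4 : dist y z ≤ Metric.diam (V m i) := Metric.dist_le_diam_of_mem hVb hy hzV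
    have e5 : dist z (x m i) < ρ := by
      rw [dist_comm]; exact lt_of_lt_of_le hz (min_le_left _ _)
    calc dist y (x m i) ≤ dist y z + dist z (x m i) := dist_triangle _ _ _
      _ < C₁ * ε m + ρ := by
          have := le_trans e4 (hV_diam m i); linarith
  -- measurability of Voronoi cells
  have hVmeas : ∀ m i, MeasurableSet (V m i) := by
    intro m i
    have heq : V m i = Ω ∩ ⋂ j, {y | j ≠ i → dist y (x m i) < dist y (x m j)} := by
      rw [hV]; ext y
      simp only [Set.mem_setOf_eq, Set.mem_inter_iff, Set.mem_iInter]
    rw [heq]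
    apply hΩ_open.measurableSet.inter
    apply MeasurableSet.iInter
    intro j
    by_cases hj : j = i
    · have : {y : EuclideanSpace ℝ (Fin 3) | j ≠ i → dist y (x m i) < dist y (x m j)} =
          Set.univ := by
        ext y; simp [hj]
      rw [this]; exact MeasurableSet.univ
    · have : {y : EuclideanSpace ℝ (Fin 3) | j ≠ i → dist y (x m i) < dist y (x m j)} =
          {y | dist y (x m i) < dist y (x m j)} := by
        ext y; simp [hj]
      rw [this]
      exact measurableSet_lt (measurable_id.dist measurable_const)
        (measurable_id.dist measurable_const)
  -- measurability of φ m and G m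
  have hφmeas : ∀ m, Measurable (φ m) := by
    intro m
    rw [funext (hφ m)]
    refine Measurable.const_mul ?_ _
    apply Finset.measurable_sum; intro i _
    apply Finset.measurable_sum; intro j _
    by_cases hc : β * ε m ≤ dist (x m i) (x m j)
    · simp only [if_pos hc]
      exact (measurable_const.mul
          ((measurable_const.indicator (hVmeas m i)).comp measurable_fst)).mul
        ((measurable_const.indicator (hVmeas m j)).comp measurable_snd)
    · simp only [if_neg hc]; exact measurable_const
  have hGmeas : ∀ m, Measurable (G m) := by
    intro m
    rw [funext (hG m)]
    refine Measurable.const_mul ?_ _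
    apply Finset.measurable_sum; intro i _
    apply Finset.measurable_sum; intro j _
    by_cases hc : β * ε m ≤ dist (x m i) (x m j)
    · simp only [if_pos hc]
      exact (measurable_const.mul
          ((measurable_const.indicator (hVmeas m i)).comp measurable_fst)).mul
        ((measurable_const.indicator (hVmeas m j)).comp measurable_snd)
    · simp only [if_neg hc]; exact measurable_const
  -- structure lemma: at every point, at most one pair of cells contributes
  have lemB : ∀ m p, (G m p = 0 ∧ φ m p = 0) ∨
      ∃ i j, p.1 ∈ V m i ∧ p.2 ∈ V m j ∧
        G m p = fker K k l (x m i) (x m j) * φ m p := by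
    intro m p
    by_cases hc1 : ∃ i, p.1 ∈ V m i
    · by_cases hc2 : ∃ j, p.2 ∈ V m j
      · obtain ⟨i0, hi0⟩ := hc1; obtain ⟨j0, hj0⟩ := hc2
        right
        refine ⟨i0, j0, hi0, hj0, ?_⟩
        have cG := collapse_sum (V m) (V m) (hdisj m) (hdisj m)
          (fun i j => K (dist (x m i) (x m j)) * (x m i k - x m j k) * (x m i l - x m j l) /
            dist (x m i) (x m j) ^ 2 * A m i j * ((volume (V m i)).toReal)⁻¹ *
            ((volume (V m j)).toReal)⁻¹)
          (fun i j => β * ε m ≤ dist (x m i) (x m j)) p.1 p.2 i0 j0 hi0 hj0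
        have cφ := collapse_sum (V m) (V m) (hdisj m) (hdisj m)
          (fun i j => A m i j * ((volume (V m i)).toReal)⁻¹ * ((volume (V m j)).toReal)⁻¹)
          (fun i j => β * ε m ≤ dist (x m i) (x m j)) p.1 p.2 i0 j0 hi0 hj0
        simp only [] at cG cφ
        rw [hG m p, hφ m p, cG, cφ]
        by_cases hcc : β * ε m ≤ dist (x m i0) (x m j0)
        · rw [if_pos hcc, if_pos hcc]
          simp only [fker]
          ring
        · rw [if_neg hcc, if_neg hcc]; simp
      · push_neg at hc2
        left
        have cG := collapse_zero (V m) (V m)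
          (fun i j => K (dist (x m i) (x m j)) * (x m i k - x m j k) * (x m i l - x m j l) /
            dist (x m i) (x m j) ^ 2 * A m i j * ((volume (V m i)).toReal)⁻¹ *
            ((volume (V m j)).toReal)⁻¹)
          (fun i j => β * ε m ≤ dist (x m i) (x m j)) p.1 p.2 (Or.inr hc2)
        have cφ := collapse_zero (V m) (V m)
          (fun i j => A m i j * ((volume (V m i)).toReal)⁻¹ * ((volume (V m j)).toReal)⁻¹)
          (fun i j => β * ε m ≤ dist (x m i) (x m j)) p.1 p.2 (Or.inr hc2)
        simp only [] at cG cφ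
        rw [hG m p, hφ m p, cG, cφ]
        constructor <;> simp
    · push_neg at hc1
      left
      have cG := collapse_zero (V m) (V m)
        (fun i j => K (dist (x m i) (x m j)) * (x m i k - x m j k) * (x m i l - x m j l) /
          dist (x m i) (x m j) ^ 2 * A m i j * ((volume (V m i)).toReal)⁻¹ *
          ((volume (V m j)).toReal)⁻¹)
        (fun i j => β * ε m ≤ dist (x m i) (x m j)) p.1 p.2 (Or.inl hc1)
      have cφ := collapse_zero (V m) (V m)
        (fun i j => A m i j * ((volume (V m i)).toReal)⁻¹ * ((volume (V m j)).toReal)⁻¹)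
        (fun i j => β * ε m ≤ dist (x m i) (x m j)) p.1 p.2 (Or.inl hc1)
      simp only [] at cG cφ
      rw [hG m p, hφ m p, cG, cφ]
      constructor <;> simp
  -- pointwise bound
  have hGbound : ∀ m p, |G m p - fker K k l p.1 p.2 * φ m p| ≤ 2 * CK * |φ m p| := by
    intro m p
    rcases lemB m p with ⟨h1, h2⟩ | ⟨i, j, _, _, hGf⟩
    · rw [h1, h2]; simp
    · rw [hGf, ← sub_mul, abs_mul]
      have e1 : |fker K k l (x m i) (x m j) - fker K k l p.1 p.2| ≤ 2 * CK := by
        have a1 := fker_abs_le hCK k l (x m i) (x m j)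
        have a2 := fker_abs_le hCK k l p.1 p.2
        rw [abs_le] at a1 a2 ⊢
        constructor <;> linarith [a1.1, a1.2, a2.1, a2.2]
      exact mul_le_mul_of_nonneg_right e1 (abs_nonneg _)
  -- a.e. uniform bound on φ m
  obtain ⟨C0, hC0⟩ := hφ_bdd
  set Cφ := max C0 0 with hCφdef
  have hCφ0 : 0 ≤ Cφ := le_max_right _ _
  have haeφ : ∀ᵐ p ∂(volume.restrict (Ω ×ˢ Ω)), ∀ m, |φ m p| ≤ Cφ := by
    rw [ae_all_iff]
    intro m
    have h1 : eLpNorm (φ m) ⊤ (volume.restrict (Ω ×ˢ Ω)) ≤ ENNReal.ofReal Cφ :=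
      le_trans (hC0 m) (ENNReal.ofReal_le_ofReal (le_max_left _ _))
    rw [eLpNorm_exponent_top] at h1
    filter_upwards [MeasureTheory.ae_le_eLpNormEssSup (f := φ m)
      (μ := volume.restrict (Ω ×ˢ Ω))] with p hp
    have h3 : (‖φ m p‖₊ : ENNReal) ≤ ENNReal.ofReal Cφ := le_trans hp h1
    rw [← enorm_eq_nnnorm, ← ofReal_norm] at h3
    rw [← Real.norm_eq_abs]
    exact (ENNReal.ofReal_le_ofReal_iff hCφ0).mp h3
  -- a.e. off the diagonal
  have hdiag : (volume : Measure (EuclideanSpace ℝ (Fin 3) × EuclideanSpace ℝ (Fin 3)))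
      {p | p.1 = p.2} = 0 := by
    rw [Measure.volume_eq_prod]
    have hms : MeasurableSet
        {p : EuclideanSpace ℝ (Fin 3) × EuclideanSpace ℝ (Fin 3) | p.1 = p.2} :=
      (isClosed_eq continuous_fst continuous_snd).measurableSet
    rw [Measure.prod_apply hms]
    have hpre : ∀ a : EuclideanSpace ℝ (Fin 3),
        (Prod.mk a ⁻¹' {p : EuclideanSpace ℝ (Fin 3) × EuclideanSpace ℝ (Fin 3) |
          p.1 = p.2}) = {a} := by
      intro a; ext y
      simp [eq_comm]
    simp only [hpre, measure_singleton, lintegral_zero]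
  have haene : ∀ᵐ p ∂(volume.restrict (Ω ×ˢ Ω)),
      p.1 ≠ p.2 := by
    apply ae_restrict_of_ae
    rw [ae_iff]
    simpa [not_not] using hdiag
  -- pointwise convergence
  have hptw : ∀ p : EuclideanSpace ℝ (Fin 3) × EuclideanSpace ℝ (Fin 3), p.1 ≠ p.2 →
      (∀ m, |φ m p| ≤ Cφ) →
      Tendsto (fun m => G m p - fker K k l p.1 p.2 * φ m p) atTop (𝓝 0) := by
    intro p hnep hb
    rw [Metric.tendsto_atTop]
    intro η hη
    have hη' : 0 < η / (2 * (Cφ + 1)) := by positivity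
    obtain ⟨ρ, hρpos, hρ⟩ := Metric.continuousAt_iff.mp
      (fker_continuousAt K hK_cont k l p hnep) _ hη'
    have hev : ∀ᶠ m in atTop, C₁ * ε m < ρ := by
      have h1 : Tendsto (fun m => C₁ * ε m) atTop (𝓝 (C₁ * 0)) := hε_lim.const_mul C₁
      rw [mul_zero] at h1
      exact h1.eventually_lt_const hρpos
    obtain ⟨M, hM⟩ := eventually_atTop.mp hev
    refine ⟨M, fun m hm => ?_⟩
    rw [Real.dist_eq, sub_zero]
    rcases lemB m p with ⟨h1, h2⟩ | ⟨i, j, hi, hj, hGf⟩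
    · rw [h1, h2, mul_zero, sub_zero, abs_zero]; exact hη
    · rw [hGf, ← sub_mul, abs_mul]
      have e1 : dist (((x m i), (x m j)) :
          EuclideanSpace ℝ (Fin 3) × EuclideanSpace ℝ (Fin 3)) p < ρ := by
        rw [Prod.dist_eq]
        apply max_lt
        · rw [dist_comm]; exact lt_of_le_of_lt (hxV m i p.1 hi) (hM m hm)
        · rw [dist_comm]; exact lt_of_le_of_lt (hxV m j p.2 hj) (hM m hm)
      have e2 := hρ e1
      rw [Real.dist_eq] at e2
      simp only [] at e2
      have e3 : |fker K k l (x m i) (x m j) - fker K k l p.1 p.2| * |φ m p| ≤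
          η / (2 * (Cφ + 1)) * Cφ :=
        mul_le_mul e2.le (hb m) (abs_nonneg _) hη'.le
      have e4 : η / (2 * (Cφ + 1)) * Cφ < η := by
        rw [div_mul_eq_mul_div, div_lt_iff₀ (by linarith : (0:ℝ) < 2 * (Cφ + 1))]
        nlinarith
      exact lt_of_le_of_lt e3 e4
  -- integrability facts
  have hfmeas := fker_measurable K hK_cont k l
  have hDmeas : ∀ m, AEStronglyMeasurable
      (fun p => (G m p - fker K k l p.1 p.2 * φ m p) * h p)
      (volume.restrict (Ω ×ˢ Ω)) := fun m =>
    (((hGmeas m).sub (hfmeas.mul (hφmeas m))).aestronglyMeasurable).mul hh.1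
  have hInt_fh : Integrable (fun p => fker K k l p.1 p.2 * h p)
      (volume.restrict (Ω ×ˢ Ω)) :=
    hh.bdd_mul hfmeas.aestronglyMeasurable
      (ae_of_all _ fun p => by rw [Real.norm_eq_abs]; exact fker_abs_le hCK k l p.1 p.2)
  have hbound_int : Integrable (fun p => 2 * CK * Cφ * |h p|)
      (volume.restrict (Ω ×ˢ Ω)) := (hh.abs).const_mul _
  have hDbound : ∀ m, ∀ᵐ p ∂(volume.restrict (Ω ×ˢ Ω)),
      ‖(G m p - fker K k l p.1 p.2 * φ m p) * h p‖ ≤ 2 * CK * Cφ * |h p| := by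
    intro m
    filter_upwards [haeφ] with p hp
    rw [Real.norm_eq_abs, abs_mul]
    have e1 : |G m p - fker K k l p.1 p.2 * φ m p| ≤ 2 * CK * Cφ :=
      le_trans (hGbound m p) (mul_le_mul_of_nonneg_left (hp m) (by positivity))
    exact mul_le_mul_of_nonneg_right e1 (abs_nonneg _)
  have hDint : ∀ m, Integrable (fun p => (G m p - fker K k l p.1 p.2 * φ m p) * h p)
      (volume.restrict (Ω ×ˢ Ω)) :=
    fun m => Integrable.mono' hbound_int (hDmeas m) (hDbound m)
  have hφfh_int : ∀ m, Integrable (fun p => φ m p * (fker K k l p.1 p.2 * h p))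
      (volume.restrict (Ω ×ˢ Ω)) := by
    intro m
    apply Integrable.mono' (hInt_fh.norm.const_mul Cφ)
      ((hφmeas m).aestronglyMeasurable.mul hInt_fh.1)
    filter_upwards [haeφ] with p hp
    simp only [Pi.mul_apply, norm_mul, Real.norm_eq_abs]
    exact mul_le_mul_of_nonneg_right (hp m) (mul_nonneg (abs_nonneg _) (abs_nonneg _))
  -- the first term tends to zero by dominated convergence
  have hDtend : Tendsto
      (fun m => ∫ p in Ω ×ˢ Ω, (G m p - fker K k l p.1 p.2 * φ m p) * h p) atTop (𝓝 0) := by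
    have hlim : ∀ᵐ p ∂(volume.restrict (Ω ×ˢ Ω)),
        Tendsto (fun m => (G m p - fker K k l p.1 p.2 * φ m p) * h p) atTop
          (𝓝 ((fun _ => (0:ℝ)) p)) := by
      filter_upwards [haeφ, haene] with p hp hnep
      have := (hptw p hnep hp).mul_const (h p)
      rw [zero_mul] at this
      exact this
    have h0 := tendsto_integral_of_dominated_convergence
      (μ := volume.restrict (Ω ×ˢ Ω))
      (F := fun m p => (G m p - fker K k l p.1 p.2 * φ m p) * h p)
      (f := fun _ => (0:ℝ)) _ hDmeas hbound_int hDbound hlim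
    simpa using h0
  -- the second term converges by the weak-* assumption
  have hsecond := hφ_weakstar (fun p => fker K k l p.1 p.2 * h p) hInt_fh
  -- splitting
  have hsplit : ∀ m, (∫ p in Ω ×ˢ Ω, G m p * h p) =
      (∫ p in Ω ×ˢ Ω, (G m p - fker K k l p.1 p.2 * φ m p) * h p) +
      (∫ p in Ω ×ˢ Ω, φ m p * (fker K k l p.1 p.2 * h p)) := by
    intro m
    rw [← integral_add (hDint m) (hφfh_int m)]
    apply integral_congr_ae
    apply ae_of_all
    intro p
    ring
  have hfinal := hDtend.add hsecond
  rw [zero_add] at hfinal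
  have hgoal : (∫ p in Ω ×ˢ Ω,
      K (dist p.1 p.2) * φlim p * (p.1 k - p.2 k) * (p.1 l - p.2 l) /
        dist p.1 p.2 ^ 2 * h p) = ∫ p in Ω ×ˢ Ω, φlim p * (fker K k l p.1 p.2 * h p) := by
    apply integral_congr_ae
    apply ae_of_all
    intro p
    simp only [fker]
    ring
  rw [hgoal]
  exact hfinal.congr fun m => (hsplit m).symm
end

section
/- Let U ⊆ ℂ be an open connected set, E a complex Banach space, and (f_n) a sequence of holomorphic functions f_n : U → E such that for every compact K ⊆ U, sup_n sup_{z∈K} ‖f_n(z)‖ < ∞. Suppose that (f_n(z)) converges in E for every z in a subset S ⊆ U that has an accumulation point in U. Then there exists a holomorphic function f : U → E such that f_n → f uniformly on every compact subset of U. -/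
open Filter Topology

set_option maxHeartbeats 1000000

/-- Geometric tail bound for a power-series-type sum with coefficient bounds. -/
private lemma vitali_geom_tail {E : Type*} [NormedAddCommGroup E] [NormedSpace ℂ E]
    {v : ℕ → E} {s : E} {w : ℂ} {C R σ : ℝ} (hC : 0 ≤ C) (hR : 0 < R)
    (hv : ∀ k, ‖v k‖ ≤ C / R ^ k) (hwσ : ‖w‖ ≤ σ) (hσR : σ < R)
    (hs : HasSum (fun k => w ^ k • v k) s) (N : ℕ) :
    ‖s - ∑ k ∈ Finset.range N, w ^ k • v k‖ ≤ C * (σ / R) ^ N / (1 - σ / R) := by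
  set c : ℝ := σ / R with hc
  have hσ0 : 0 ≤ σ := (norm_nonneg w).trans hwσ
  have hc0 : 0 ≤ c := div_nonneg hσ0 hR.le
  have hc1 : c < 1 := (div_lt_one hR).2 hσR
  have hterm : ∀ k, ‖w ^ k • v k‖ ≤ C * c ^ k := by
    intro k
    rw [norm_smul, norm_pow]
    calc ‖w‖ ^ k * ‖v k‖ ≤ σ ^ k * (C / R ^ k) := by
          apply mul_le_mul (pow_le_pow_left₀ (norm_nonneg w) hwσ k) (hv k)
            (norm_nonneg _) (pow_nonneg hσ0 k)
      _ = C * c ^ k := by rw [hc, div_pow]; field_simp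
  have key : s - ∑ k ∈ Finset.range N, w ^ k • v k + ∑ k ∈ Finset.range N, w ^ k • v k = s := by
    abel
  have hshift : HasSum (fun k => w ^ (k + N) • v (k + N))
      (s - ∑ k ∈ Finset.range N, w ^ k • v k) := by
    refine (hasSum_nat_add_iff (f := fun k => w ^ k • v k) N).2 ?_
    rw [key]; exact hs
  have hterm' : ∀ k, ‖w ^ (k + N) • v (k + N)‖ ≤ C * c ^ N * c ^ k := by
    intro k
    calc ‖w ^ (k + N) • v (k + N)‖ ≤ C * c ^ (k + N) := hterm _
      _ = C * c ^ N * c ^ k := by rw [pow_add]; ring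
  have hsumnorm : Summable fun k => ‖w ^ (k + N) • v (k + N)‖ :=
    Summable.of_nonneg_of_le (fun k => norm_nonneg _) hterm'
      ((summable_geometric_of_lt_one hc0 hc1).mul_left _)
  calc ‖s - ∑ k ∈ Finset.range N, w ^ k • v k‖
      = ‖∑' k, w ^ (k + N) • v (k + N)‖ := by rw [hshift.tsum_eq]
    _ ≤ ∑' k, ‖w ^ (k + N) • v (k + N)‖ := norm_tsum_le_tsum_norm hsumnorm
    _ ≤ ∑' k : ℕ, C * c ^ N * c ^ k := by
        exact Summable.tsum_le_tsum hterm' hsumnorm ((summable_geometric_of_lt_one hc0 hc1).mul_left _)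
    _ = C * c ^ N * (1 - c)⁻¹ := by
        rw [tsum_mul_left, tsum_geometric_of_lt_one hc0 hc1]
    _ = C * c ^ N / (1 - c) := by rw [div_eq_mul_inv]

/-- Cauchy estimate for the coefficients of the Cauchy power series. -/
private lemma vitali_coeff_bound {E : Type*} [NormedAddCommGroup E] [NormedSpace ℂ E]
    (f : ℂ → E) (b : ℂ) {R r M : ℝ} (hR : 0 < R) (hRr : R < r)
    (hf : DifferentiableOn ℂ f (Metric.ball b r)) (hM : ∀ z ∈ Metric.ball b r, ‖f z‖ ≤ M)
    (k : ℕ) : ‖cauchyPowerSeries f b R k fun _ => (1 : ℂ)‖ ≤ M / R ^ k := by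
  have hmem : ∀ θ : ℝ, circleMap b R θ ∈ Metric.ball b r := by
    intro θ
    simp only [Metric.mem_ball, dist_eq_norm]
    calc ‖circleMap b R θ - b‖ = |R| := by simp [circleMap, abs_of_pos hR]
      _ < r := by rwa [abs_of_pos hR]
  have hcont : Continuous fun θ : ℝ => ‖f (circleMap b R θ)‖ :=
    (hf.continuousOn.comp_continuous (continuous_circleMap b R) hmem).norm
  have hint : (∫ θ : ℝ in (0)..2 * Real.pi, ‖f (circleMap b R θ)‖) ≤ 2 * Real.pi * M := by
    have h2π : (0:ℝ) ≤ 2 * Real.pi := by positivity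
    calc (∫ θ : ℝ in (0)..2 * Real.pi, ‖f (circleMap b R θ)‖)
        ≤ ∫ _ : ℝ in (0)..2 * Real.pi, M := by
          apply intervalIntegral.integral_mono_on h2π
            (hcont.intervalIntegrable _ _) (intervalIntegrable_const)
          intro x _
          exact hM _ (hmem x)
      _ = 2 * Real.pi * M := by simp [mul_comm]
  have h1 : ‖cauchyPowerSeries f b R k fun _ => (1 : ℂ)‖ ≤ ‖cauchyPowerSeries f b R k‖ := by
    calc ‖cauchyPowerSeries f b R k fun _ => (1 : ℂ)‖
        ≤ ‖cauchyPowerSeries f b R k‖ * ∏ _i : Fin k, ‖(1:ℂ)‖ :=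
          (cauchyPowerSeries f b R k).le_opNorm _
      _ = ‖cauchyPowerSeries f b R k‖ := by simp
  refine h1.trans ((norm_cauchyPowerSeries_le f b R k).trans ?_)
  rw [abs_of_pos hR]
  have hM0 : 0 ≤ M := (norm_nonneg _).trans (hM b (by simp [hR.trans hRr]))
  have h2 : (2 * Real.pi)⁻¹ * (∫ θ : ℝ in (0)..2 * Real.pi, ‖f (circleMap b R θ)‖) ≤ M := by
    rw [inv_mul_le_iff₀ (by positivity)]
    exact hint.trans_eq (by ring)
  calc (2 * Real.pi)⁻¹ * (∫ θ : ℝ in (0)..2 * Real.pi, ‖f (circleMap b R θ)‖) * R⁻¹ ^ k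
      ≤ M * R⁻¹ ^ k := by
        apply mul_le_mul_of_nonneg_right h2 (by positivity)
    _ = M / R ^ k := by rw [inv_pow, div_eq_mul_inv]

/-- Key local lemma: a locally bounded sequence of holomorphic functions on a ball which is
pointwise Cauchy on a sequence of points accumulating at the center is uniformly Cauchy on
smaller closed balls. -/
private lemma vitali_key {E : Type*} [NormedAddCommGroup E] [NormedSpace ℂ E] [CompleteSpace E]
    (b : ℂ) (r : ℝ) (f : ℕ → ℂ → E) (M : ℝ) (hM0 : 0 < M)
    (hholo : ∀ n, DifferentiableOn ℂ (f n) (Metric.ball b r))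
    (hM : ∀ n, ∀ z ∈ Metric.ball b r, ‖f n z‖ ≤ M)
    (hacc : ∀ δ, 0 < δ → ∃ z, z ≠ b ∧ dist z b < δ ∧ CauchySeq fun n => f n z)
    (ρ : ℝ) (hρ0 : 0 < ρ) (hρ : ρ < r) :
    ∀ ε > (0:ℝ), ∃ N, ∀ m ≥ N, ∀ n ≥ N, ∀ z ∈ Metric.closedBall b ρ,
      ‖f m z - f n z‖ ≤ ε := by
  have hr : 0 < r := hρ0.trans hρ
  set R : ℝ := (ρ + r) / 2 with hRdef
  have hR0 : 0 < R := by positivity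
  have hρR : ρ < R := by simp only [hRdef]; linarith
  have hRr : R < r := by simp only [hRdef]; linarith
  have hRc : ((R.toNNReal : NNReal) : ℝ) = R := Real.coe_toNNReal _ hR0.le
  have hps : ∀ n, HasFPowerSeriesOnBall (f n) (cauchyPowerSeries (f n) b R) b R.toNNReal := by
    intro n
    have hdiff : DifferentiableOn ℂ (f n) (Metric.closedBall b R.toNNReal) := by
      rw [hRc]
      exact (hholo n).mono (Metric.closedBall_subset_ball hRr)
    have hpos : 0 < R.toNNReal := Real.toNNReal_pos.2 hR0
    have h := hdiff.hasFPowerSeriesOnBall hpos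
    rwa [hRc] at h
  set a : ℕ → ℕ → E := fun n k => cauchyPowerSeries (f n) b R k fun _ => (1:ℂ) with ha
  have happ : ∀ n k (w : ℂ), (cauchyPowerSeries (f n) b R k fun _ => w) = w ^ k • a n k := by
    intro n k w
    have h1 : (fun _ : Fin k => w) = fun _ : Fin k => w • (1:ℂ) := by
      funext i; simp
    rw [h1, ContinuousMultilinearMap.map_smul_univ]
    simp [ha]
  have hbound : ∀ n k, ‖a n k‖ ≤ M / R ^ k := fun n k =>
    vitali_coeff_bound (f n) b hR0 hRr (hholo n) (hM n) k
  have hsum : ∀ (n : ℕ) (z : ℂ), dist z b < R →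
      HasSum (fun k => (z - b) ^ k • a n k) (f n z) := by
    intro n z hz
    have hz' : z ∈ Metric.eball b R.toNNReal := by
      rw [Metric.emetric_ball_nnreal, hRc]
      exact hz
    have := (hps n).hasSum_sub hz'
    simpa only [happ] using this
  have hΔsum : ∀ (m n : ℕ) (z : ℂ), dist z b < R →
      HasSum (fun k => (z - b) ^ k • (a m k - a n k)) (f m z - f n z) := by
    intro m n z hz
    have := (hsum m z hz).sub (hsum n z hz)
    simpa only [smul_sub] using this
  have hΔbound : ∀ m n k, ‖a m k - a n k‖ ≤ 2 * M / R ^ k := by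
    intro m n k
    calc ‖a m k - a n k‖ ≤ ‖a m k‖ + ‖a n k‖ := norm_sub_le _ _
      _ ≤ M / R ^ k + M / R ^ k := add_le_add (hbound m k) (hbound n k)
      _ = 2 * M / R ^ k := by ring
  -- Step 1: the coefficients form Cauchy sequences.
  have hcoef : ∀ K, ∀ ε > (0:ℝ), ∃ N, ∀ m ≥ N, ∀ n ≥ N, ‖a m K - a n K‖ ≤ ε := by
    intro K
    induction K using Nat.strong_induction_on with
    | _ K IH =>
    intro ε hε
    obtain ⟨z, hzb, hzd, hzc⟩ := hacc (min (R / 2) (ε * R ^ (K + 1) / (8 * M)))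
      (lt_min (by positivity) (by positivity))
    set w : ℂ := z - b with hwdef
    have hw0 : 0 < ‖w‖ := by
      rw [norm_pos_iff]
      exact sub_ne_zero.2 hzb
    have hdist : dist z b = ‖w‖ := dist_eq_norm z b
    have hwR2 : ‖w‖ ≤ R / 2 := by
      rw [← hdist]; exact le_of_lt (hzd.trans_le (min_le_left _ _))
    have hwε : ‖w‖ ≤ ε * R ^ (K + 1) / (8 * M) := by
      rw [← hdist]; exact le_of_lt (hzd.trans_le (min_le_right _ _))
    have hzballR : dist z b < R := by rw [hdist]; linarith
    -- N₁ : pointwise Cauchyness at z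
    obtain ⟨N₁, hN₁⟩ := Metric.cauchySeq_iff.mp hzc (ε / 4 * ‖w‖ ^ K) (by positivity)
    -- N₂ : induction hypothesis for all k < K
    have hchoice : ∀ k, k < K → ∃ N, ∀ m ≥ N, ∀ n ≥ N,
        ‖a m k - a n k‖ ≤ ε / (4 * (K + 1)) * ‖w‖ ^ K / ‖w‖ ^ k :=
      fun k hk => IH k hk _ (by positivity)
    choose! N₂f hN₂f using hchoice
    set N₂ : ℕ := (Finset.range K).sup N₂f with hN₂def
    refine ⟨max N₁ N₂, fun m hm n hn => ?_⟩
    have hm₁ : N₁ ≤ m := le_trans (le_max_left _ _) hm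
    have hn₁ : N₁ ≤ n := le_trans (le_max_left _ _) hn
    set Δ : ℕ → E := fun k => a m k - a n k with hΔdef
    have hS : HasSum (fun k => w ^ k • Δ k) (f m z - f n z) := hΔsum m n z hzballR
    -- tail bound with N = K + 1
    have htail : ‖(f m z - f n z) - ∑ k ∈ Finset.range (K + 1), w ^ k • Δ k‖
        ≤ 2 * M * (‖w‖ / R) ^ (K + 1) / (1 - ‖w‖ / R) := by
      exact vitali_geom_tail (by positivity) hR0 (hΔbound m n) le_rfl
        (lt_of_le_of_lt hwR2 (by linarith)) hS (K + 1)
    have hwR : ‖w‖ / R ≤ 1 / 2 := by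
      rw [div_le_div_iff₀ hR0 (by norm_num)]
      linarith
    have htail2 : 2 * M * (‖w‖ / R) ^ (K + 1) / (1 - ‖w‖ / R)
        ≤ 4 * M * (‖w‖ ^ (K + 1) / R ^ (K + 1)) := by
      have h1 : (1:ℝ) - ‖w‖ / R ≥ 1 / 2 := by linarith
      have h2 : (0:ℝ) < 1 - ‖w‖ / R := by linarith
      rw [div_le_iff₀ h2, div_pow]
      have h3 : (0:ℝ) ≤ ‖w‖ ^ (K + 1) / R ^ (K + 1) := by positivity
      nlinarith [mul_nonneg (mul_nonneg hM0.le h3)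
        (by linarith : (0:ℝ) ≤ 1 - ‖w‖ / R - 1 / 2)]
    have htail3 : 4 * M * (‖w‖ ^ (K + 1) / R ^ (K + 1)) ≤ ε / 2 * ‖w‖ ^ K := by
      have hRp : (0:ℝ) < R ^ (K + 1) := by positivity
      have h4 : 4 * M * ‖w‖ ≤ ε * R ^ (K + 1) / 2 := by
        calc 4 * M * ‖w‖ ≤ 4 * M * (ε * R ^ (K + 1) / (8 * M)) := by
              apply mul_le_mul_of_nonneg_left hwε (by positivity)
          _ = ε * R ^ (K + 1) / 2 := by field_simp; ring
      rw [pow_succ]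
      calc 4 * M * (‖w‖ ^ K * ‖w‖ / R ^ (K + 1))
          = (4 * M * ‖w‖) * ‖w‖ ^ K / R ^ (K + 1) := by ring
        _ ≤ (ε * R ^ (K + 1) / 2) * ‖w‖ ^ K / R ^ (K + 1) := by gcongr
        _ = ε / 2 * ‖w‖ ^ K := by field_simp
    -- main sum bound
    have hsum_small : ∑ k ∈ Finset.range K, ‖w ^ k • Δ k‖ ≤ ε / 4 * ‖w‖ ^ K := by
      have hterm : ∀ k ∈ Finset.range K, ‖w ^ k • Δ k‖ ≤ ε / (4 * (K + 1)) * ‖w‖ ^ K := by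
        intro k hk
        rw [Finset.mem_range] at hk
        have hm₂ : N₂f k ≤ m := le_trans (Finset.le_sup (Finset.mem_range.2 hk)) <|
          le_trans (le_max_right N₁ N₂) hm
        have hn₂ : N₂f k ≤ n := le_trans (Finset.le_sup (Finset.mem_range.2 hk)) <|
          le_trans (le_max_right N₁ N₂) hn
        have hΔk := hN₂f k hk m hm₂ n hn₂
        rw [norm_smul, norm_pow]
        calc ‖w‖ ^ k * ‖Δ k‖ ≤ ‖w‖ ^ k * (ε / (4 * (K + 1)) * ‖w‖ ^ K / ‖w‖ ^ k) :=
              mul_le_mul_of_nonneg_left hΔk (by positivity)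
          _ = ε / (4 * (K + 1)) * ‖w‖ ^ K := by
              rw [mul_comm (‖w‖ ^ k)]
              exact div_mul_cancel₀ _ (by positivity)
      calc ∑ k ∈ Finset.range K, ‖w ^ k • Δ k‖
          ≤ ∑ _k ∈ Finset.range K, ε / (4 * (K + 1)) * ‖w‖ ^ K := Finset.sum_le_sum hterm
        _ = K * (ε / (4 * (K + 1)) * ‖w‖ ^ K) := by
            rw [Finset.sum_const, Finset.card_range, nsmul_eq_mul]
        _ ≤ ((K:ℝ) + 1) * (ε / (4 * (K + 1)) * ‖w‖ ^ K) := by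
            apply mul_le_mul_of_nonneg_right (by linarith [Nat.cast_nonneg (α := ℝ) K])
              (by positivity)
        _ = ε / 4 * ‖w‖ ^ K := by
            have hK1 : ((K:ℝ) + 1) ≠ 0 := by positivity
            field_simp
    have hD : ‖f m z - f n z‖ ≤ ε / 4 * ‖w‖ ^ K := by
      have := hN₁ m hm₁ n hn₁
      rw [dist_eq_norm] at this
      exact this.le
    -- decompose w ^ K • Δ K
    have hdecomp : w ^ K • Δ K = (f m z - f n z) - ∑ k ∈ Finset.range K, w ^ k • Δ k
        - ((f m z - f n z) - ∑ k ∈ Finset.range (K + 1), w ^ k • Δ k) := by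
      rw [Finset.sum_range_succ]
      abel
    have hfinal : ‖w‖ ^ K * ‖Δ K‖ ≤ ε * ‖w‖ ^ K := by
      have h1 : ‖w ^ K • Δ K‖ = ‖w‖ ^ K * ‖Δ K‖ := by rw [norm_smul, norm_pow]
      have hA : ‖(f m z - f n z) - ∑ k ∈ Finset.range K, w ^ k • Δ k‖
          ≤ ε / 4 * ‖w‖ ^ K + ε / 4 * ‖w‖ ^ K :=
        (norm_sub_le _ _).trans (add_le_add hD ((norm_sum_le _ _).trans hsum_small))
      have hB : ‖(f m z - f n z) - ∑ k ∈ Finset.range (K + 1), w ^ k • Δ k‖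
          ≤ ε / 2 * ‖w‖ ^ K := htail.trans (htail2.trans htail3)
      rw [← h1, hdecomp]
      calc ‖(f m z - f n z) - ∑ k ∈ Finset.range K, w ^ k • Δ k
            - ((f m z - f n z) - ∑ k ∈ Finset.range (K + 1), w ^ k • Δ k)‖
          ≤ ‖(f m z - f n z) - ∑ k ∈ Finset.range K, w ^ k • Δ k‖
            + ‖(f m z - f n z) - ∑ k ∈ Finset.range (K + 1), w ^ k • Δ k‖ := norm_sub_le _ _
        _ ≤ (ε / 4 * ‖w‖ ^ K + ε / 4 * ‖w‖ ^ K) + ε / 2 * ‖w‖ ^ K := add_le_add hA hB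
        _ = ε * ‖w‖ ^ K := by ring
    have hwK : (0:ℝ) < ‖w‖ ^ K := by positivity
    calc ‖a m K - a n K‖ = ‖Δ K‖ := rfl
      _ ≤ ε := by
        by_contra h
        push_neg at h
        nlinarith [hfinal, hwK]
  -- Step 2: uniform Cauchyness on the closed ball of radius ρ.
  intro ε hε
  have hρR1 : ρ / R < 1 := (div_lt_one hR0).2 hρR
  have hρR0 : 0 ≤ ρ / R := by positivity
  -- choose N₀ with small geometric tail
  have htend : Tendsto (fun N : ℕ => 2 * M * (ρ / R) ^ N / (1 - ρ / R)) atTop (𝓝 0) := by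
    have h1 : Tendsto (fun N : ℕ => (ρ / R) ^ N) atTop (𝓝 0) :=
      tendsto_pow_atTop_nhds_zero_of_lt_one hρR0 hρR1
    have := (h1.const_mul (2 * M)).div_const (1 - ρ / R)
    simpa using this
  obtain ⟨N₀, hN₀⟩ := (htend.eventually (gt_mem_nhds (by positivity : (0:ℝ) < ε / 2))).exists
  -- choose N for the first N₀ coefficients
  set η : ℝ := ε / (2 * (N₀ + 1) * max ρ 1 ^ N₀) with hηdef
  have hη : 0 < η := by
    have : (0:ℝ) < max ρ 1 := lt_of_lt_of_le one_pos (le_max_right _ _)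
    positivity
  have hchoice : ∀ k, ∃ N, ∀ m ≥ N, ∀ n ≥ N, ‖a m k - a n k‖ ≤ η :=
    fun k => hcoef k η hη
  choose Nf hNf using hchoice
  refine ⟨(Finset.range N₀).sup Nf, fun m hm n hn z hz => ?_⟩
  rw [Metric.mem_closedBall] at hz
  set w : ℂ := z - b with hwdef
  have hwρ : ‖w‖ ≤ ρ := by rw [← dist_eq_norm]; exact hz
  have hzR : dist z b < R := lt_of_le_of_lt hz hρR
  set Δ : ℕ → E := fun k => a m k - a n k with hΔdef
  have hS : HasSum (fun k => w ^ k • Δ k) (f m z - f n z) := hΔsum m n z hzR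
  have htail : ‖(f m z - f n z) - ∑ k ∈ Finset.range N₀, w ^ k • Δ k‖
      ≤ 2 * M * (ρ / R) ^ N₀ / (1 - ρ / R) :=
    vitali_geom_tail (by positivity) hR0 (hΔbound m n) hwρ hρR hS N₀
  have hhead : ‖∑ k ∈ Finset.range N₀, w ^ k • Δ k‖ ≤ ε / 2 := by
    have hterm : ∀ k ∈ Finset.range N₀, ‖w ^ k • Δ k‖ ≤ max ρ 1 ^ N₀ * η := by
      intro k hk
      rw [Finset.mem_range] at hk
      have hmk : Nf k ≤ m := le_trans (Finset.le_sup (Finset.mem_range.2 hk)) hm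
      have hnk : Nf k ≤ n := le_trans (Finset.le_sup (Finset.mem_range.2 hk)) hn
      have hΔk := hNf k m hmk n hnk
      rw [norm_smul, norm_pow]
      have hwk : ‖w‖ ^ k ≤ max ρ 1 ^ N₀ := by
        calc ‖w‖ ^ k ≤ max ρ 1 ^ k :=
              pow_le_pow_left₀ (norm_nonneg _) (hwρ.trans (le_max_left _ _)) k
          _ ≤ max ρ 1 ^ N₀ := pow_le_pow_right₀ (le_max_right _ _) hk.le
      exact mul_le_mul hwk hΔk (norm_nonneg _) (by positivity)
    calc ‖∑ k ∈ Finset.range N₀, w ^ k • Δ k‖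
        ≤ ∑ k ∈ Finset.range N₀, ‖w ^ k • Δ k‖ := norm_sum_le _ _
      _ ≤ ∑ _k ∈ Finset.range N₀, max ρ 1 ^ N₀ * η := Finset.sum_le_sum hterm
      _ = N₀ * (max ρ 1 ^ N₀ * η) := by
          rw [Finset.sum_const, Finset.card_range, nsmul_eq_mul]
      _ ≤ ε / 2 := by
          have hmax : (0:ℝ) < max ρ 1 := lt_of_lt_of_le one_pos (le_max_right _ _)
          have h1 : (N₀:ℝ) * (max ρ 1 ^ N₀ * η) = (N₀ / (N₀ + 1)) * (ε / 2) := by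
            rw [hηdef]; field_simp
          rw [h1]
          have h2 : (N₀:ℝ) / (N₀ + 1) ≤ 1 := by
            rw [div_le_one (by positivity)]; linarith
          nlinarith [h2, hε.le]
  have hsplit : f m z - f n z = ((f m z - f n z) - ∑ k ∈ Finset.range N₀, w ^ k • Δ k)
      + ∑ k ∈ Finset.range N₀, w ^ k • Δ k := by abel
  calc ‖f m z - f n z‖
      ≤ ‖(f m z - f n z) - ∑ k ∈ Finset.range N₀, w ^ k • Δ k‖
        + ‖∑ k ∈ Finset.range N₀, w ^ k • Δ k‖ := by
          conv_lhs => rw [hsplit]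
          exact norm_add_le _ _
    _ ≤ ε / 2 + ε / 2 := add_le_add (htail.trans hN₀.le) hhead
    _ = ε := by ring

/-- **Vitali's theorem for Banach-valued holomorphic functions.**
If `(f_n)` are holomorphic on an open connected `U ⊆ ℂ` with values in a complex Banach
space, locally uniformly bounded on `U`, and converge pointwise on a set `S ⊆ U` having an
accumulation point in `U`, then there is a holomorphic `f : U → E` with `f_n → f` uniformly
on every compact subset of `U`. -/
theorem vitali_banach_valued
    {E : Type*} [NormedAddCommGroup E] [NormedSpace ℂ E] [CompleteSpace E]
    (U : Set ℂ) (hU_open : IsOpen U) (hU_conn : IsConnected U)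
    (f : ℕ → ℂ → E)
    (hf_holo : ∀ n, DifferentiableOn ℂ (f n) U)
    (hf_bdd : ∀ K : Set ℂ, K ⊆ U → IsCompact K → ∃ C : ℝ, ∀ n, ∀ z ∈ K, ‖f n z‖ ≤ C)
    (S : Set ℂ) (hSU : S ⊆ U)
    (hS_acc : ∃ z₀ ∈ U, AccPt z₀ (𝓟 S))
    (hconv : ∀ z ∈ S, ∃ l : E, Tendsto (fun n => f n z) atTop (𝓝 l)) :
    ∃ g : ℂ → E, DifferentiableOn ℂ g U ∧
      ∀ K : Set ℂ, K ⊆ U → IsCompact K → TendstoUniformlyOn f g atTop K := by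
  classical
  obtain ⟨z₀, hz₀U, hz₀acc⟩ := hS_acc
  have hScauchy : ∀ z ∈ S, CauchySeq fun n => f n z := by
    intro z hz
    obtain ⟨l, hl⟩ := hconv z hz
    exact hl.cauchySeq
  -- Local propagation step.
  have main_step : ∀ c ∈ U, ∀ ε : ℝ, 0 < ε → Metric.ball c ε ⊆ U → ∀ b' : ℂ,
      dist b' c < ε / 8 →
      (∀ δ, 0 < δ → ∃ z, z ≠ b' ∧ dist z b' < δ ∧ CauchySeq fun n => f n z) →
      ∃ δ > 0, Metric.ball c δ ⊆ U ∧ ∀ η > (0:ℝ), ∃ N, ∀ m ≥ N, ∀ n ≥ N,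
        ∀ w ∈ Metric.ball c δ, ‖f m w - f n w‖ ≤ η := by
    intro c hc ε hε hball b' hb' haccb
    obtain ⟨C, hC⟩ := hf_bdd (Metric.closedBall c (3 * ε / 4))
      ((Metric.closedBall_subset_ball (by linarith)).trans hball)
      (isCompact_closedBall _ _)
    have hM0 : (0:ℝ) < max C 1 := lt_of_lt_of_le one_pos (le_max_right _ _)
    have hsub : Metric.ball b' (5 * ε / 8) ⊆ Metric.closedBall c (3 * ε / 4) := by
      intro x hx
      rw [Metric.mem_ball] at hx
      rw [Metric.mem_closedBall]
      calc dist x c ≤ dist x b' + dist b' c := dist_triangle _ _ _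
        _ ≤ 3 * ε / 4 := by linarith
    have hsubU : Metric.ball b' (5 * ε / 8) ⊆ U :=
      hsub.trans ((Metric.closedBall_subset_ball (by linarith)).trans hball)
    have hkey := vitali_key b' (5 * ε / 8) f (max C 1) hM0
      (fun n => (hf_holo n).mono hsubU)
      (fun n z hz => le_trans (hC n z (hsub hz)) (le_max_left _ _))
      haccb (ε / 4) (by linarith) (by linarith)
    refine ⟨ε / 8, by linarith, (Metric.ball_subset_ball (by linarith)).trans hball, ?_⟩
    intro η hη
    obtain ⟨N, hN⟩ := hkey η hη
    refine ⟨N, fun m hm n hn w hw => hN m hm n hn w ?_⟩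
    rw [Metric.mem_ball] at hw
    rw [Metric.mem_closedBall]
    calc dist w b' ≤ dist w c + dist c b' := dist_triangle _ _ _
      _ ≤ ε / 4 := by rw [dist_comm c b']; linarith
  -- The set of points near which the sequence is uniformly Cauchy.
  set B : Set ℂ := {z | ∃ δ > 0, Metric.ball z δ ⊆ U ∧ ∀ η > (0:ℝ), ∃ N, ∀ m ≥ N, ∀ n ≥ N,
    ∀ w ∈ Metric.ball z δ, ‖f m w - f n w‖ ≤ η} with hBdef
  have hBc : ∀ z ∈ B, ∀ δ', 0 < δ' →
      ∃ y, y ≠ z ∧ dist y z < δ' ∧ CauchySeq fun n => f n y := by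
    intro z hz δ' hδ'
    obtain ⟨δ, hδ0, hδU, hδC⟩ := hz
    set t : ℝ := min δ' δ / 2 with htdef
    have ht0 : 0 < t := by
      have := lt_min hδ' hδ0
      positivity
    have htδ : t < δ := by
      have h1 : min δ' δ ≤ δ := min_le_right _ _
      simp only [htdef]; linarith
    have htδ' : t < δ' := by
      have h1 : min δ' δ ≤ δ' := min_le_left _ _
      simp only [htdef]; linarith
    refine ⟨z + (t:ℂ), ?_, ?_, ?_⟩
    · intro h
      have : (t:ℂ) = 0 := by
        have := congrArg (fun x => x - z) h
        simpa using this
      exact ht0.ne' (by exact_mod_cast this)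
    · have : dist (z + (t:ℂ)) z = t := by
        rw [dist_eq_norm]
        simp [abs_of_pos ht0]
      rw [this]; exact htδ'
    · rw [Metric.cauchySeq_iff]
      intro η hη
      obtain ⟨N, hN⟩ := hδC (η / 2) (by positivity)
      refine ⟨N, fun m hm n hn => ?_⟩
      have hmem : z + (t:ℂ) ∈ Metric.ball z δ := by
        rw [Metric.mem_ball, dist_eq_norm]
        simpa [abs_of_pos ht0] using htδ
      have := hN m hm n hn (z + (t:ℂ)) hmem
      rw [dist_eq_norm]
      linarith
  -- z₀ belongs to B.
  have hacc₀ : ∀ δ, 0 < δ → ∃ z, z ≠ z₀ ∧ dist z z₀ < δ ∧ CauchySeq fun n => f n z := by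
    intro δ hδ
    rw [accPt_iff_nhds] at hz₀acc
    obtain ⟨y, ⟨hy1, hy2⟩, hy3⟩ := hz₀acc (Metric.ball z₀ δ) (Metric.ball_mem_nhds _ hδ)
    exact ⟨y, hy3, by rwa [← Metric.mem_ball], hScauchy y hy2⟩
  have hz₀B : z₀ ∈ B := by
    obtain ⟨ε, hε, hball⟩ := Metric.isOpen_iff.1 hU_open z₀ hz₀U
    exact main_step z₀ hz₀U ε hε hball z₀ (by rw [dist_self]; positivity) hacc₀
  -- U ∩ closure B ⊆ B.
  have hclosure : ∀ w ∈ U, w ∈ closure B → w ∈ B := by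
    intro w hwU hwcl
    obtain ⟨ε, hε, hball⟩ := Metric.isOpen_iff.1 hU_open w hwU
    obtain ⟨b', hb'B, hb'd⟩ := Metric.mem_closure_iff.1 hwcl (ε / 8) (by positivity)
    exact main_step w hwU ε hε hball b' (by rw [dist_comm]; exact hb'd) (hBc b' hb'B)
  -- B is open.
  have hBopen : IsOpen B := by
    rw [Metric.isOpen_iff]
    intro z hz
    obtain ⟨δ, hδ0, hδU, hδC⟩ := hz
    refine ⟨δ / 2, by positivity, ?_⟩
    intro y hy
    rw [Metric.mem_ball] at hy
    have hsub : Metric.ball y (δ / 2) ⊆ Metric.ball z δ := by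
      intro x hx
      rw [Metric.mem_ball] at hx ⊢
      calc dist x z ≤ dist x y + dist y z := dist_triangle _ _ _
        _ < δ := by linarith
    refine ⟨δ / 2, by positivity, hsub.trans hδU, ?_⟩
    intro η hη
    obtain ⟨N, hN⟩ := hδC η hη
    exact ⟨N, fun m hm n hn x hx => hN m hm n hn x (hsub hx)⟩
  -- By connectedness, U ⊆ B.
  have hUB : ∀ z ∈ U, z ∈ B := by
    by_contra h
    push_neg at h
    obtain ⟨w, hwU, hwB⟩ := h
    have hw : w ∈ (closure B)ᶜ := fun hc => hwB (hclosure w hwU hc)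
    have hpre := hU_conn.isPreconnected
    have hcov : U ⊆ B ∪ (closure B)ᶜ := by
      intro z hzU
      by_cases hz : z ∈ closure B
      · exact Or.inl (hclosure z hzU hz)
      · exact Or.inr hz
    obtain ⟨x, hxU, hxB, hxC⟩ := hpre B (closure B)ᶜ hBopen isClosed_closure.isOpen_compl
      hcov ⟨z₀, hz₀U, hz₀B⟩ ⟨w, hwU, hw⟩
    exact hxC (subset_closure hxB)
  -- Pointwise convergence on U.
  have hptC : ∀ z ∈ U, CauchySeq fun n => f n z := by
    intro z hz
    obtain ⟨δ, hδ0, hδU, hδC⟩ := hUB z hz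
    rw [Metric.cauchySeq_iff]
    intro η hη
    obtain ⟨N, hN⟩ := hδC (η / 2) (by positivity)
    refine ⟨N, fun m hm n hn => ?_⟩
    have := hN m hm n hn z (Metric.mem_ball_self hδ0)
    rw [dist_eq_norm]
    linarith
  choose! g hg using fun z (hz : z ∈ U) => cauchySeq_tendsto_of_complete (hptC z hz)
  -- Uniform Cauchyness on compact subsets.
  have hUC : ∀ K : Set ℂ, K ⊆ U → IsCompact K → UniformCauchySeqOn f atTop K := by
    intro K hKU hK
    rw [Metric.uniformCauchySeqOn_iff]
    intro η hη
    choose! δf hδf using hUB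
    have hcov : K ⊆ ⋃ z : K, Metric.ball (z:ℂ) (δf z) := by
      intro x hx
      exact Set.mem_iUnion.2 ⟨⟨x, hx⟩, Metric.mem_ball_self (hδf x (hKU hx)).1⟩
    obtain ⟨t, ht⟩ := hK.elim_finite_subcover (fun z : K => Metric.ball (z:ℂ) (δf z))
      (fun z => Metric.isOpen_ball) hcov
    choose Nf hNf using fun z : K => (hδf z (hKU z.2)).2.2 (η / 2) (by positivity)
    refine ⟨t.sup Nf, fun m hm n hn x hx => ?_⟩
    obtain ⟨i, hit, hxi⟩ := Set.mem_iUnion₂.1 (ht hx)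
    have := hNf i m (le_trans (Finset.le_sup hit) hm) n (le_trans (Finset.le_sup hit) hn)
      x hxi
    rw [dist_eq_norm]
    linarith
  refine ⟨g, ?_, ?_⟩
  · have hloc : TendstoLocallyUniformlyOn f g atTop U := by
      rw [tendstoLocallyUniformlyOn_iff_forall_isCompact hU_open]
      intro K hKU hK
      exact (hUC K hKU hK).tendstoUniformlyOn_of_tendsto fun x hx => hg x (hKU hx)
    exact hloc.differentiableOn (Eventually.of_forall hf_holo) hU_open
  · intro K hKU hK
    exact (hUC K hKU hK).tendstoUniformlyOn_of_tendsto fun x hx => hg x (hKU hx)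
end
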